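/- In the quotient ring ℂ[a,b]/(a−b, (W(a)−W(b))/(a−b)), where W ∈ ℂ[x], the quotient is isomorphic as a ℂ-algebra to the Jacobi ring ℂ[x]/(W'(x)). -/

import Mathlib

open MvPolynomial

/-- For `W ∈ ℂ[x]` and `Q = (W(a)-W(b))/(a-b) ∈ ℂ[a,b]`, the quotient ring
`ℂ[a,b]/(a−b, Q)` is isomorphic as a `ℂ`-algebra to the Jacobi ring `ℂ[x]/(W')`. -/
theorem stmt_5 (W : Polynomial ℂ) (Q : MvPolynomial (Fin 2) ℂ)
    (hQ : (X 0 - X 1) * Q =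
      Polynomial.aeval (X 0 : MvPolynomial (Fin 2) ℂ) W -
        Polynomial.aeval (X 1 : MvPolynomial (Fin 2) ℂ) W) :
    Nonempty ((MvPolynomial (Fin 2) ℂ ⧸ Ideal.span {X 0 - X 1, Q}) ≃ₐ[ℂ]
      (Polynomial ℂ ⧸ Ideal.span {Polynomial.derivative W})) := by
  -- Differentiate hQ with respect to the first variable.
  have hKey : Q + (X 0 - X 1) * pderiv (R := ℂ) 0 Q
      = Polynomial.aeval (X 0 : MvPolynomial (Fin 2) ℂ) (Polynomial.derivative W) := by
    have h := congrArg (pderiv (R := ℂ) (0 : Fin 2)) hQ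
    rw [Derivation.leibniz, map_sub, map_sub, Derivation.map_aeval, Derivation.map_aeval,
      pderiv_X_self, pderiv_X_of_ne (by decide)] at h
    simpa [smul_eq_mul, mul_comm, add_comm] using h
  -- The evaluation map a, b ↦ x.
  set φ : MvPolynomial (Fin 2) ℂ →ₐ[ℂ] Polynomial ℂ :=
    aeval ![Polynomial.X, Polynomial.X] with hφ
  have hφ0 : φ (X 0) = Polynomial.X := by simp [hφ]
  have hφ1 : φ (X 1) = Polynomial.X := by simp [hφ]
  have hφQ : φ Q = Polynomial.derivative W := by
    have h := congrArg φ hKey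
    rw [map_add, map_mul, map_sub, hφ0, hφ1, ← Polynomial.aeval_algHom_apply, hφ0,
      Polynomial.aeval_X_left_apply] at h
    simpa using h
  set I : Ideal (MvPolynomial (Fin 2) ℂ) := Ideal.span {X 0 - X 1, Q} with hI
  set J : Ideal (Polynomial ℂ) := Ideal.span {Polynomial.derivative W} with hJ
  have hQmem : Q ∈ I := Ideal.subset_span (by simp)
  have hdmem : X 0 - X 1 ∈ I := Ideal.subset_span (by simp)
  -- Forward map
  have hsub : I ≤ J.comap φ.toRingHom := by
    rw [hI]
    apply Ideal.span_le.mpr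
    rintro p (rfl | rfl)
    · simp only [SetLike.mem_coe, Ideal.mem_comap, AlgHom.toRingHom_eq_coe,
        RingHom.coe_coe, map_sub, hφ0, hφ1, sub_self]
      exact J.zero_mem
    · simp only [SetLike.mem_coe, Ideal.mem_comap, AlgHom.toRingHom_eq_coe,
        RingHom.coe_coe, hφQ]
      exact Ideal.subset_span (by simp)
  have hfz : ∀ p ∈ I, (Ideal.Quotient.mkₐ ℂ J).comp φ p = 0 := by
    intro p hp
    simp only [AlgHom.comp_apply, Ideal.Quotient.mkₐ_eq_mk]
    exact Ideal.Quotient.eq_zero_iff_mem.mpr (Ideal.mem_comap.mp (hsub hp))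
  let F := Ideal.Quotient.liftₐ I ((Ideal.Quotient.mkₐ ℂ J).comp φ) hfz
  -- Backward map
  set ψ : Polynomial ℂ →ₐ[ℂ] MvPolynomial (Fin 2) ℂ :=
    Polynomial.aeval (X 0) with hψ
  have hψW' : ψ (Polynomial.derivative W) ∈ I := by
    rw [hψ, ← hKey]
    exact I.add_mem hQmem (I.mul_mem_right _ hdmem)
  have hsub' : J ≤ I.comap ψ.toRingHom := by
    rw [hJ]
    apply Ideal.span_le.mpr
    rintro p rfl
    exact Ideal.mem_comap.mpr hψW'
  have hgz : ∀ p ∈ J, (Ideal.Quotient.mkₐ ℂ I).comp ψ p = 0 := by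
    intro p hp
    simp only [AlgHom.comp_apply, Ideal.Quotient.mkₐ_eq_mk]
    exact Ideal.Quotient.eq_zero_iff_mem.mpr (Ideal.mem_comap.mp (hsub' hp))
  let G := Ideal.Quotient.liftₐ J ((Ideal.Quotient.mkₐ ℂ I).comp ψ) hgz
  refine ⟨AlgEquiv.ofAlgHom F G ?_ ?_⟩
  · apply Ideal.Quotient.algHom_ext
    apply Polynomial.algHom_ext
    show F (Ideal.Quotient.mk I (ψ Polynomial.X)) = Ideal.Quotient.mk J Polynomial.X
    show Ideal.Quotient.mk J (φ (ψ Polynomial.X)) = Ideal.Quotient.mk J Polynomial.X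
    simp [hψ, hφ0]
  · apply Ideal.Quotient.algHom_ext
    apply MvPolynomial.algHom_ext
    intro i
    fin_cases i
    · show G (F (Ideal.Quotient.mk I (X 0))) = Ideal.Quotient.mk I (X 0)
      show Ideal.Quotient.mk I (ψ (φ (X 0))) = Ideal.Quotient.mk I (X 0)
      simp [hφ0, hψ]
    · show G (F (Ideal.Quotient.mk I (X 1))) = Ideal.Quotient.mk I (X 1)
      have hmk : Ideal.Quotient.mk I (X 0) = Ideal.Quotient.mk I (X 1) :=
        (Ideal.Quotient.mk_eq_mk_iff_sub_mem _ _).mpr hdmem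
      show Ideal.Quotient.mk I (ψ (φ (X 1))) = Ideal.Quotient.mk I (X 1)
      simp [hφ1, hψ, hmk]
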